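/- Let G be a finite nonempty connected simple graph, let X ⊆ V(G) be a set of vertices such that the induced subgraph G[X] is connected and X is a dominating set of G (every vertex of G not in X has a neighbour in X), and let f be a proper coloring of G using k colors such that the restriction of f to X is a connected greedy coloring of G[X]. Then χ_c(G) ≤ k. -/

import Mathlib

open SimpleGraph

/-- One step of the greedy coloring algorithm: color the vertex `w` with the smallest
positive integer not already used on one of its (already colored) neighbours.
Color `0` means "not yet colored". -/
noncomputable def greedyStep {V : Type*} [DecidableEq V] (G : SimpleGraph V)
    (f : V → ℕ) (w : V) : V → ℕ :=
  Function.update f w (sInf {n : ℕ | 0 < n ∧ ∀ z, G.Adj w z → f z ≠ n})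

/-- The coloring obtained by greedily coloring the vertices of the list `l` in order,
starting from the partial coloring `f₀`. -/
noncomputable def greedyFrom {V : Type*} [DecidableEq V] (G : SimpleGraph V)
    (f₀ : V → ℕ) (l : List V) : V → ℕ :=
  l.foldl (greedyStep G) f₀

/-- The greedy coloring of the ordering `l` (all vertices initially uncolored). -/
noncomputable def greedy {V : Type*} [DecidableEq V] (G : SimpleGraph V)
    (l : List V) : V → ℕ :=
  greedyFrom G (fun _ => 0) l

/-- `l` is a connected ordering of the vertices of `G`: it lists every vertex exactly once,
and every vertex other than the first has a neighbour occurring earlier in the list. -/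
def IsConnectedOrder {V : Type*} (G : SimpleGraph V) (l : List V) : Prop :=
  l.Nodup ∧ (∀ w : V, w ∈ l) ∧
    ∀ i : Fin l.length, 0 < (i : ℕ) →
      ∃ j : Fin l.length, (j : ℕ) < (i : ℕ) ∧ G.Adj (l.get i) (l.get j)

/-- `f` is a connected greedy coloring (CGC) of `G`. -/
def IsCGC {V : Type*} [DecidableEq V] (G : SimpleGraph V) (f : V → ℕ) : Prop :=
  ∃ l : List V, IsConnectedOrder G l ∧ f = greedy G l

/-- `f` is an `(x, α)`-connected greedy coloring of `G`: it is obtained from a connected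
ordering starting at `x` by coloring `x` with `α` and then coloring each subsequent
vertex with the smallest positive integer not appearing on its already-colored
neighbours. -/
def IsCGCFrom {V : Type*} [DecidableEq V] (G : SimpleGraph V) (x : V) (α : ℕ)
    (f : V → ℕ) : Prop :=
  ∃ l : List V, IsConnectedOrder G (x :: l) ∧
    f = greedyFrom G (Function.update (fun _ => 0) x α) l

/-- `f` uses exactly `k` colors. -/
def UsesColors {V : Type*} (f : V → ℕ) (k : ℕ) : Prop :=
  ∃ s : Finset ℕ, (∀ w, f w ∈ s) ∧ (∀ c ∈ s, ∃ w, f w = c) ∧ s.card = k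

/-- The connected chromatic number of `G`: the least `k` such that some connected greedy
coloring of `G` only uses colors in `{1, …, k}`. -/
noncomputable def connChrom {V : Type*} [DecidableEq V] (G : SimpleGraph V) : ℕ :=
  sInf {k | ∃ f, IsCGC G f ∧ ∀ w, f w ≤ k}

lemma greedyFrom_induce_agree {V : Type*} [DecidableEq V] (G : SimpleGraph V) (X : Set V)
    (l : List X) (f₀ : V → ℕ) (g₀ : X → ℕ)
    (hag : ∀ x : X, f₀ x = g₀ x) (h0 : ∀ v, v ∉ X → f₀ v = 0) :
    (∀ x : X, greedyFrom G f₀ (l.map Subtype.val) x = greedyFrom (G.induce X) g₀ l x) ∧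
    (∀ v, v ∉ X → greedyFrom G f₀ (l.map Subtype.val) v = 0) := by
  induction l generalizing f₀ g₀ with
  | nil => exact ⟨hag, h0⟩
  | cons x l ih =>
    have hset : {n : ℕ | 0 < n ∧ ∀ z, G.Adj ↑x z → f₀ z ≠ n}
        = {n : ℕ | 0 < n ∧ ∀ z : X, (G.induce X).Adj x z → g₀ z ≠ n} := by
      ext n
      constructor
      · rintro ⟨hn, hz⟩
        refine ⟨hn, fun z hadj => ?_⟩
        have hGadj : G.Adj ↑x ↑z := by simpa [SimpleGraph.comap_adj] using hadj
        have := hz z hGadj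
        rwa [hag z] at this
      · rintro ⟨hn, hz⟩
        refine ⟨hn, fun z hadj => ?_⟩
        by_cases hzX : z ∈ X
        · have hIadj : (G.induce X).Adj x ⟨z, hzX⟩ := by
            simpa [SimpleGraph.comap_adj] using hadj
          have := hz ⟨z, hzX⟩ hIadj
          rw [← hag ⟨z, hzX⟩] at this
          exact this
        · rw [h0 z hzX]; omega
    have hag' : ∀ y : X, greedyStep G f₀ ↑x ↑y = greedyStep (G.induce X) g₀ x y := by
      intro y
      unfold greedyStep
      rw [hset]
      by_cases hyx : y = x
      · subst hyx; simp
      · rw [Function.update_of_ne (fun h => hyx (Subtype.ext h)),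
          Function.update_of_ne hyx]
        exact hag y
    have h0' : ∀ v, v ∉ X → greedyStep G f₀ ↑x v = 0 := by
      intro v hv
      unfold greedyStep
      rw [Function.update_of_ne (fun h : v = ↑x => hv (h ▸ x.2))]
      exact h0 v hv
    have := ih (greedyStep G f₀ ↑x) (greedyStep (G.induce X) g₀ x) hag' h0'
    simpa [greedyFrom, List.foldl_cons] using this

lemma connectedOrder_append {V : Type*} (G : SimpleGraph V) (X : Set V)
    (hXdom : ∀ z : V, z ∉ X → ∃ x ∈ X, G.Adj z x)
    (lX : List X) (hord : IsConnectedOrder (G.induce X) lX)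
    (rest : List V) (hrestnd : rest.Nodup) (hrestmem : ∀ v, v ∈ rest ↔ v ∉ X) :
    IsConnectedOrder G (lX.map Subtype.val ++ rest) := by
  have hlen : (lX.map (Subtype.val : X → V) ++ rest).length = lX.length + rest.length := by
    simp
  have hget : ∀ (m : ℕ) (hm : m < lX.length)
      (hm' : m < (lX.map (Subtype.val : X → V) ++ rest).length),
      (lX.map Subtype.val ++ rest).get ⟨m, hm'⟩ = (lX.get ⟨m, hm⟩ : V) := by
    intro m hm hm'
    rw [List.get_eq_getElem, List.getElem_append_left (by simpa using hm),
      List.getElem_map]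
    simp [List.get_eq_getElem]
  refine ⟨?_, ?_, ?_⟩
  · rw [List.nodup_append]
    refine ⟨hord.1.map Subtype.coe_injective, hrestnd, ?_⟩
    intro a ha b hb hab
    obtain ⟨x, _, rfl⟩ := List.mem_map.mp ha
    exact ((hrestmem _).mp (hab ▸ hb)) x.2
  · intro w
    by_cases hwX : w ∈ X
    · exact List.mem_append.mpr (Or.inl (List.mem_map.mpr ⟨⟨w, hwX⟩, hord.2.1 _, rfl⟩))
    · exact List.mem_append.mpr (Or.inr ((hrestmem w).mpr hwX))
  · intro i hi
    by_cases hix : (i : ℕ) < lX.length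
    · obtain ⟨j, hji, hadj⟩ := hord.2.2 ⟨i, hix⟩ hi
      have hj' : (j : ℕ) < (lX.map (Subtype.val : X → V) ++ rest).length := by
        rw [hlen]; omega
      refine ⟨⟨j, hj'⟩, hji, ?_⟩
      rw [hget i hix i.isLt, hget j j.isLt hj']
      simpa [SimpleGraph.comap_adj] using hadj
    · push_neg at hix
      have hiw : (i : ℕ) - lX.length < rest.length := by
        have h2 : (i : ℕ) < lX.length + rest.length := lt_of_lt_of_eq i.isLt hlen
        omega
      have hwget : (lX.map Subtype.val ++ rest).get i = rest[(i : ℕ) - lX.length] := by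
        rw [List.get_eq_getElem, List.getElem_append_right (by simpa using hix)]
        simp
      have hwmem : (lX.map Subtype.val ++ rest).get i ∈ rest := by
        rw [hwget]; exact List.getElem_mem _
      have hwX : (lX.map Subtype.val ++ rest).get i ∉ X := (hrestmem _).mp hwmem
      obtain ⟨x, hx, hadj⟩ := hXdom _ hwX
      obtain ⟨j, hjget⟩ := List.mem_iff_get.mp (hord.2.1 ⟨x, hx⟩)
      have hj' : (j : ℕ) < (lX.map (Subtype.val : X → V) ++ rest).length := by
        rw [hlen]; have := j.isLt; omega
      refine ⟨⟨j, hj'⟩, lt_of_lt_of_le j.isLt hix, ?_⟩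
      rw [hget j j.isLt hj', hjget]
      exact hadj

lemma greedyFrom_rest_bound {V : Type*} [DecidableEq V] (G : SimpleGraph V) (X : Set V)
    (f : V → ℕ)
    (hproper : ∀ a b : V, G.Adj a b → f a ≠ f b)
    (hrange : ∀ z : V, 1 ≤ f z) :
    ∀ (rest : List V) (h : V → ℕ),
      rest.Nodup →
      (∀ v ∈ rest, v ∉ X ∧ h v = 0) →
      List.Pairwise (fun a b => f a ≤ f b) rest →
      (∀ x ∈ X, h x = f x) →
      (∀ v, v ∉ X → h v ≤ f v) →
      (∀ v, v ∉ X → 0 < h v → ∀ u ∈ rest, f v ≤ f u) →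
      (∀ x ∈ X, greedyFrom G h rest x = f x) ∧
      (∀ v, v ∉ X → greedyFrom G h rest v ≤ f v) := by
  intro rest
  induction rest with
  | nil =>
    intro h _ _ _ hX hle _
    exact ⟨fun x hx => hX x hx, fun v hv => hle v hv⟩
  | cons w rest ih =>
    intro h hnd hmem hpair hX hle hlo
    obtain ⟨hwX, hw0⟩ := hmem w (List.mem_cons_self)
    have hfwS : f w ∈ {n : ℕ | 0 < n ∧ ∀ z, G.Adj w z → h z ≠ n} := by
      refine ⟨hrange w, fun z hadj => ?_⟩
      by_cases hzX : z ∈ X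
      · rw [hX z hzX]
        exact (hproper w z hadj).symm
      · rcases Nat.eq_zero_or_pos (h z) with h0 | hpos
        · rw [h0]; have := hrange w; omega
        · intro hcon
          have h1 : f z ≤ f w := hlo z hzX hpos w (List.mem_cons_self)
          have h2 : h z ≤ f z := hle z hzX
          have h3 : f z = f w := by omega
          exact hproper w z hadj h3.symm
    set c := sInf {n : ℕ | 0 < n ∧ ∀ z, G.Adj w z → h z ≠ n} with hc
    have hcle : c ≤ f w := Nat.sInf_le hfwS
    have hcmem : c ∈ {n : ℕ | 0 < n ∧ ∀ z, G.Adj w z → h z ≠ n} :=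
      Nat.sInf_mem ⟨f w, hfwS⟩
    have hh' : greedyStep G h w = Function.update h w c := rfl
    have hwrest : w ∉ rest := (List.nodup_cons.mp hnd).1
    have key := ih (greedyStep G h w) (List.nodup_cons.mp hnd).2
      (by
        intro v hv
        have hne : v ≠ w := fun e => hwrest (e ▸ hv)
        rw [hh', Function.update_of_ne hne]
        exact hmem v (List.mem_cons_of_mem _ hv))
      (List.pairwise_cons.mp hpair).2
      (by
        intro x hx
        have hne : x ≠ w := fun e => hwX (e ▸ hx)
        rw [hh', Function.update_of_ne hne]
        exact hX x hx)
      (by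
        intro v hv
        by_cases hvw : v = w
        · subst hvw; rw [hh', Function.update_self]; exact hcle
        · rw [hh', Function.update_of_ne hvw]; exact hle v hv)
      (by
        intro v hv hpos u hu
        by_cases hvw : v = w
        · subst hvw
          exact (List.pairwise_cons.mp hpair).1 u hu
        · rw [hh', Function.update_of_ne hvw] at hpos
          exact hlo v hv hpos u (List.mem_cons_of_mem _ hu))
    exact key

theorem statement19 {V : Type*} [Fintype V] [DecidableEq V] [Nonempty V]
    (G : SimpleGraph V) (hG : G.Connected)
    (X : Set V)
    (hXconn : (G.induce X).Connected)
    (hXdom : ∀ z : V, z ∉ X → ∃ x ∈ X, G.Adj z x)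
    (k : ℕ) (f : V → ℕ)
    (hproper : ∀ a b : V, G.Adj a b → f a ≠ f b)
    (hrange : ∀ z : V, f z ∈ Finset.Icc 1 k)
    (hsurj : ∀ c ∈ Finset.Icc 1 k, ∃ z : V, f z = c)
    (hres : IsCGC (G.induce X) (fun w : X => f w)) :
    connChrom G ≤ k := by
  classical
  obtain ⟨lX, hlXord, hlXeq⟩ := hres
  set rest : List V :=
    ((Finset.univ.filter (fun v => v ∉ X)).toList).mergeSort
      (fun a b => decide (f a ≤ f b)) with hrestdef
  have hrestperm : rest.Perm (Finset.univ.filter (fun v => v ∉ X)).toList :=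
    List.mergeSort_perm _ _
  have hrestmem : ∀ v, v ∈ rest ↔ v ∉ X := by
    intro v
    rw [hrestperm.mem_iff, Finset.mem_toList, Finset.mem_filter]
    simp
  have hrestnd : rest.Nodup := hrestperm.nodup_iff.mpr (Finset.nodup_toList _)
  have hrestsorted : List.Pairwise (fun a b => f a ≤ f b) rest := by
    have hs := List.pairwise_mergeSort (le := fun a b => decide (f a ≤ f b))
      (fun a b c hab hbc => by
        simp only [decide_eq_true_eq] at *; omega)
      (fun a b => by
        simp only [Bool.or_eq_true, decide_eq_true_eq]; omega)
      ((Finset.univ.filter (fun v => v ∉ X)).toList)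
    rw [← hrestdef] at hs
    exact hs.imp (fun h => by simpa using h)
  have hconn : IsConnectedOrder G (lX.map Subtype.val ++ rest) :=
    connectedOrder_append G X hXdom lX hlXord rest hrestnd hrestmem
  have hA := greedyFrom_induce_agree G X lX (fun _ => 0) (fun _ => 0)
    (fun _ => rfl) (fun _ _ => rfl)
  have hAX : ∀ x ∈ X, greedyFrom G (fun _ => 0) (lX.map Subtype.val) x = f x := by
    intro x hx
    rw [hA.1 ⟨x, hx⟩]
    exact (congrFun hlXeq ⟨x, hx⟩).symm
  have hrange1 : ∀ z : V, 1 ≤ f z := fun z => (Finset.mem_Icc.mp (hrange z)).1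
  have hB := greedyFrom_rest_bound G X f hproper hrange1 rest
    (greedyFrom G (fun _ => 0) (lX.map Subtype.val)) hrestnd
    (fun v hv => ⟨(hrestmem v).mp hv, hA.2 v ((hrestmem v).mp hv)⟩)
    hrestsorted hAX
    (fun v hv => by rw [hA.2 v hv]; omega)
    (fun v hv hpos u _ => by rw [hA.2 v hv] at hpos; omega)
  have hbound : ∀ w, greedy G (lX.map Subtype.val ++ rest) w ≤ k := by
    intro w
    have hgw : greedy G (lX.map Subtype.val ++ rest) w
        = greedyFrom G (greedyFrom G (fun _ => 0) (lX.map Subtype.val)) rest w := by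
      simp [greedy, greedyFrom, List.foldl_append]
    rw [hgw]
    have hfk : f w ≤ k := (Finset.mem_Icc.mp (hrange w)).2
    by_cases hw : w ∈ X
    · rw [hB.1 w hw]; exact hfk
    · exact le_trans (hB.2 w hw) hfk
  exact Nat.sInf_le ⟨greedy G (lX.map Subtype.val ++ rest), ⟨_, hconn, rfl⟩, hbound⟩
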